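/- The equation x^2 + 5^a·11^b = y^4 has no solutions in positive integers x, y with gcd(x,y)=1 and nonnegative integers a, b. -/
import Mathlib

private lemma aux5 (y u j : ℕ) (h : u + 11 ^ j = 2 * y ^ 2) (h5 : 5 ∣ u) : False := by
  have hz := congrArg (Nat.cast : ℕ → ZMod 5) h
  push_cast at hz
  have hu : (u : ZMod 5) = 0 := (ZMod.natCast_eq_zero_iff u 5).mpr h5
  rw [hu] at hz
  have h11 : (11 : ZMod 5) = 1 := by decide
  rw [h11, one_pow] at hz
  have key : ∀ z : ZMod 5, (0 : ZMod 5) + 1 ≠ 2 * z ^ 2 := by decide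
  exact key y hz

private lemma aux11 (y v : ℕ) (h : 1 + v = 2 * y ^ 2) (h11 : 11 ∣ v) : False := by
  have hz := congrArg (Nat.cast : ℕ → ZMod 11) h
  push_cast at hz
  have hv : (v : ZMod 11) = 0 := (ZMod.natCast_eq_zero_iff v 11).mpr h11
  rw [hv] at hz
  have key : ∀ z : ZMod 11, (1 : ZMod 11) + 0 ≠ 2 * z ^ 2 := by decide
  exact key y hz

theorem no_solutions_n_eq_4 (x y a b : ℕ) (hx : 0 < x) (hy : 0 < y)
    (hgcd : Nat.gcd x y = 1) :
    x ^ 2 + 5 ^ a * 11 ^ b ≠ y ^ 4 := by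
  intro heq
  have hP : 0 < 5 ^ a * 11 ^ b := by positivity
  have hxy : x < y ^ 2 := by
    have h1 : x ^ 2 < (y ^ 2) ^ 2 := by
      calc x ^ 2 < x ^ 2 + 5 ^ a * 11 ^ b := by omega
        _ = y ^ 4 := heq
        _ = (y ^ 2) ^ 2 := by ring
    exact lt_of_pow_lt_pow_left₀ 2 (by positivity) h1
  set d1 := y ^ 2 - x with hd1
  set d2 := y ^ 2 + x with hd2
  have hxle : x ≤ y ^ 2 := hxy.le
  have heqZ : (x : ℤ) ^ 2 + 5 ^ a * 11 ^ b = (y : ℤ) ^ 4 := by exact_mod_cast heq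
  have h1 : d1 * d2 = 5 ^ a * 11 ^ b := by
    have : ((d1 : ℤ)) * d2 = 5 ^ a * 11 ^ b := by
      rw [hd1, hd2]
      push_cast [hxle]
      linear_combination -heqZ
    exact_mod_cast this
  have hsum : d1 + d2 = 2 * y ^ 2 := by
    rw [hd1, hd2]; omega
  have hdiff : d2 = d1 + 2 * x := by
    rw [hd1, hd2]; omega
  -- coprimality of d1 d2
  have hco : Nat.Coprime d1 d2 := by
    rw [Nat.Coprime]
    by_contra hne
    obtain ⟨p, hp, hpd⟩ := Nat.exists_prime_and_dvd hne
    have hp1 : p ∣ d1 := hpd.trans (Nat.gcd_dvd_left _ _)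
    have hp2 : p ∣ d2 := hpd.trans (Nat.gcd_dvd_right _ _)
    have hpP : p ∣ 5 ^ a * 11 ^ b := h1 ▸ Dvd.dvd.mul_right hp1 d2
    have hp511 : p = 5 ∨ p = 11 := by
      rcases (Nat.Prime.dvd_mul hp).mp hpP with h | h
      · left
        exact (Nat.prime_dvd_prime_iff_eq hp (by norm_num)).mp (hp.dvd_of_dvd_pow h)
      · right
        exact (Nat.prime_dvd_prime_iff_eq hp (by norm_num)).mp (hp.dvd_of_dvd_pow h)
    have hp2y : p ∣ 2 * y ^ 2 := hsum ▸ Nat.dvd_add hp1 hp2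
    have hp2x : p ∣ 2 * x := by
      have : p ∣ d2 - d1 := Nat.dvd_sub hp2 hp1
      have h2x : d2 - d1 = 2 * x := by omega
      rwa [h2x] at this
    have hco2 : Nat.Coprime p 2 := by rcases hp511 with h | h <;> subst h <;> decide
    have hpx : p ∣ x := (Nat.Coprime.dvd_of_dvd_mul_left hco2 hp2x)
    have hpy : p ∣ y := hp.dvd_of_dvd_pow (Nat.Coprime.dvd_of_dvd_mul_left hco2 hp2y)
    have : p ∣ Nat.gcd x y := Nat.dvd_gcd hpx hpy
    rw [hgcd] at this
    exact Nat.Prime.one_lt hp |>.ne' (Nat.dvd_one.mp this)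
  have hd1dvd : d1 ∣ 5 ^ a * 11 ^ b := ⟨d2, h1.symm⟩
  have hd2dvd : d2 ∣ 5 ^ a * 11 ^ b := ⟨d1, by rw [← h1]; ring⟩
  rcases Nat.eq_zero_or_pos a with ha | ha
  · -- a = 0 : both divisors are powers of 11
    subst ha
    simp only [pow_zero, one_mul] at h1 hd1dvd hd2dvd
    obtain ⟨i, hi, hdi⟩ := (Nat.dvd_prime_pow (by norm_num : Nat.Prime 11)).mp hd1dvd
    obtain ⟨j, hj, hdj⟩ := (Nat.dvd_prime_pow (by norm_num : Nat.Prime 11)).mp hd2dvd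
    have hone : d1 = 1 := by
      rcases Nat.eq_zero_or_pos i with h0 | h0
      · rw [hdi, h0, pow_zero]
      rcases Nat.eq_zero_or_pos j with h0' | h0'
      · exfalso
        have : d2 = 1 := by rw [hdj, h0', pow_zero]
        omega
      exfalso
      have h11a : (11 : ℕ) ∣ d1 := hdi ▸ dvd_pow_self 11 h0.ne'
      have h11b : (11 : ℕ) ∣ d2 := hdj ▸ dvd_pow_self 11 h0'.ne'
      have : (11 : ℕ) ∣ Nat.gcd d1 d2 := Nat.dvd_gcd h11a h11b
      rw [hco] at this
      omega
    have hd2v : d2 = 11 ^ b := by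
      have := h1
      rw [hone, one_mul] at this
      exact this
    have h11d2 : 11 ∣ d2 := by
      rcases Nat.eq_zero_or_pos b with hb | hb
      · exfalso
        rw [hb, pow_zero] at hd2v
        omega
      · exact hd2v ▸ dvd_pow_self 11 hb.ne'
    exact aux11 y d2 (by omega) h11d2
  · -- a > 0 : 5 divides d1 * d2
    have h5 : (5 : ℕ) ∣ d1 * d2 := by
      rw [h1]
      exact Dvd.dvd.mul_right (dvd_pow_self 5 ha.ne') _
    rcases (Nat.Prime.dvd_mul (by norm_num)).mp h5 with h5d | h5d
    · -- 5 ∣ d1, so d2 is a power of 11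
      have hco5 : Nat.Coprime 5 d2 := Nat.Coprime.coprime_dvd_left h5d hco
      have hco5a : Nat.Coprime d2 (5 ^ a) := (hco5.symm).pow_right a
      have hdvd11 : d2 ∣ 11 ^ b := Nat.Coprime.dvd_of_dvd_mul_left hco5a hd2dvd
      obtain ⟨j, hj, hdj⟩ := (Nat.dvd_prime_pow (by norm_num : Nat.Prime 11)).mp hdvd11
      exact aux5 y d1 j (by rw [← hdj]; omega) h5d
    · -- 5 ∣ d2, so d1 is a power of 11
      have hco5 : Nat.Coprime 5 d1 := Nat.Coprime.coprime_dvd_left h5d hco.symm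
      have hco5a : Nat.Coprime d1 (5 ^ a) := (hco5.symm).pow_right a
      have hdvd11 : d1 ∣ 11 ^ b := Nat.Coprime.dvd_of_dvd_mul_left hco5a hd1dvd
      obtain ⟨j, hj, hdj⟩ := (Nat.dvd_prime_pow (by norm_num : Nat.Prime 11)).mp hdvd11
      exact aux5 y d2 j (by rw [← hdj]; omega) h5d
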